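/- Suppose y⁴ − 6xy² + 4x(x+1)y − 3x² = 0 and define T = (y³ − 3xy + x(x+1))/(x(x−1)) (assuming x(x−1) ≠ 0). Then x = (T+1)(T−3)³/((T−1)(T+3)³) and y = −3(T−3)(T+1)/(T+3)², provided (T−1)(T+3) ≠ 0. -/

import Mathlib

/-- The rational parametrization of the Picard curve of level 3: the inverse map
T = (y³−3xy+x(x+1))/(x(x−1)) recovers x and y rationally. -/
theorem picard_level3_parametrization (x y T : ℂ)
    (hcurve : y ^ 4 - 6 * x * y ^ 2 + 4 * x * (x + 1) * y - 3 * x ^ 2 = 0)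
    (hx : x * (x - 1) ≠ 0)
    (hT : T = (y ^ 3 - 3 * x * y + x * (x + 1)) / (x * (x - 1)))
    (hden : (T - 1) * (T + 3) ≠ 0) :
    x = (T + 1) * (T - 3) ^ 3 / ((T - 1) * (T + 3) ^ 3)
      ∧ y = -3 * (T - 3) * (T + 1) / (T + 3) ^ 2 := by
  have hT1 : T - 1 ≠ 0 := fun h => hden (by rw [h]; ring)
  have hT3 : T + 3 ≠ 0 := fun h => hden (by rw [h]; ring)
  have hN : T * (x * (x - 1)) = y ^ 3 - 3 * x * y + x * (x + 1) := by
    rw [hT]; exact div_mul_cancel₀ _ hx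
  have h1 : (x * (x - 1)) ^ 4 * (x * ((T - 1) * (T + 3) ^ 3)) =
      (x * (x - 1)) ^ 4 * ((T + 1) * (T - 3) ^ 3) := by
    linear_combination ((-1:ℂ)*y^9 + (-11:ℂ)*x^1*y^6 + (1:ℂ)*x^1*y^6*T^1 + (9:ℂ)*x^1*y^7 + (1:ℂ)*x^1*y^9 + (-37:ℂ)*x^2*y^3 + (10:ℂ)*x^2*y^3*T^1 + (-1:ℂ)*x^2*y^3*T^2 + (66:ℂ)*x^2*y^4 + (-6:ℂ)*x^2*y^4*T^1 + (-27:ℂ)*x^2*y^5 + (-2:ℂ)*x^2*y^6*T^1 + (-9:ℂ)*x^2*y^7 + (-27:ℂ)*x^3 + (27:ℂ)*x^3*T^1 + (-9:ℂ)*x^3*T^2 + (1:ℂ)*x^3*T^3 + (111:ℂ)*x^3*y^1 + (-30:ℂ)*x^3*y^1*T^1 + (3:ℂ)*x^3*y^1*T^2 + (-99:ℂ)*x^3*y^2 + (9:ℂ)*x^3*y^2*T^1 + (62:ℂ)*x^3*y^3 + (-10:ℂ)*x^3*y^3*T^1 + (3:ℂ)*x^3*y^3*T^2 + (12:ℂ)*x^3*y^4*T^1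 + (27:ℂ)*x^3*y^5 + (11:ℂ)*x^3*y^6 + (1:ℂ)*x^3*y^6*T^1 + (18:ℂ)*x^4 + (-72:ℂ)*x^4*T^1 + (18:ℂ)*x^4*T^2 + (-4:ℂ)*x^4*T^3 + (-105:ℂ)*x^4*y^1 + (30:ℂ)*x^4*y^1*T^1 + (-9:ℂ)*x^4*y^1*T^2 + (-18:ℂ)*x^4*y^2*T^1 + (-62:ℂ)*x^4*y^3 + (-10:ℂ)*x^4*y^3*T^1 + (-3:ℂ)*x^4*y^3*T^2 + (-66:ℂ)*x^4*y^4 + (-6:ℂ)*x^4*y^4*T^1 + (90:ℂ)*x^5*T^1 + (6:ℂ)*x^5*T^3 + (105:ℂ)*x^5*y^1 + (30:ℂ)*x^5*y^1*T^1 + (9:ℂ)*x^5*y^1*T^2 + (99:ℂ)*x^5*y^2 + (9:ℂ)*x^5*y^2*T^1 + (37:ℂ)*x^5*y^3 + (10:ℂ)*x^5*y^3*T^1 + (1:ℂ)*x^5*y^3*T^2 + (-18:ℂ)*x^6 + (-72:ℂ)*x^6*T^1 + (-18:ℂ)*x^6*T^2 + (-4:ℂ)*x^6*T^3 + (-111:ℂ)*x^6*y^1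 + (-30:ℂ)*x^6*y^1*T^1 + (-3:ℂ)*x^6*y^1*T^2 + (27:ℂ)*x^7 + (27:ℂ)*x^7*T^1 + (9:ℂ)*x^7*T^2 + (1:ℂ)*x^7*T^3) * hN + ((-1:ℂ)*y^8 + (-8:ℂ)*x^1*y^5 + (6:ℂ)*x^1*y^6 + (1:ℂ)*x^1*y^8 + (-16:ℂ)*x^2*y^2 + (36:ℂ)*x^2*y^3 + (-21:ℂ)*x^2*y^4 + (-6:ℂ)*x^2*y^6 + (48:ℂ)*x^3 + (-48:ℂ)*x^3*y^1 + (56:ℂ)*x^3*y^2 + (21:ℂ)*x^3*y^4 + (8:ℂ)*x^3*y^5 + (-96:ℂ)*x^4 + (-56:ℂ)*x^4*y^2 + (-36:ℂ)*x^4*y^3 + (96:ℂ)*x^5 + (48:ℂ)*x^5*y^1 + (16:ℂ)*x^5*y^2 + (-48:ℂ)*x^6) * hcurve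
  have key1 := mul_left_cancel₀ (pow_ne_zero 4 hx) h1
  have h2 : (x * (x - 1)) ^ 2 * (y * (T + 3) ^ 2) =
      (x * (x - 1)) ^ 2 * (-3 * (T - 3) * (T + 1)) := by
    linear_combination ((3:ℂ)*y^3 + (1:ℂ)*y^4 + (9:ℂ)*x^1 + (-3:ℂ)*x^1*T^1 + (-14:ℂ)*x^1*y^1 + (-1:ℂ)*x^1*y^1*T^1 + (-3:ℂ)*x^1*y^2 + (-3:ℂ)*x^2 + (3:ℂ)*x^2*T^1 + (7:ℂ)*x^2*y^1 + (1:ℂ)*x^2*y^1*T^1) * hN + ((3:ℂ)*y^2 + (1:ℂ)*y^3 + (-8:ℂ)*x^1 + (4:ℂ)*x^2) * hcurve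
  have key2 := mul_left_cancel₀ (pow_ne_zero 2 hx) h2
  constructor
  · rw [eq_div_iff (by exact mul_ne_zero hT1 (pow_ne_zero 3 hT3))]
    linear_combination key1
  · rw [eq_div_iff (pow_ne_zero 2 hT3)]
    linear_combination key2
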